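/- Let μ₁, …, μ_K be probability measures on ℝ with finite second moment, and let w₁, …, w_K ≥ 0 with ∑ w_s = 1. Define q*(u) = ∑_{s=1}^K w_s F_{μ_s}⁻¹(u) for u ∈ (0,1), where F⁻¹ is the left-continuous generalized quantile function, and let μ* be the pushforward of the uniform distribution on (0,1) by q*. Then μ* is the unique minimizer over ν ∈ P₂(ℝ) of the functional ν ↦ ∑_{s=1}^K w_s W₂²(μ_s, ν). -/

import Mathlib

open MeasureTheory ProbabilityTheory Set

/-- Generalized (left-continuous) quantile function of a measure on ℝ. -/
noncomputable def quantile (μ : Measure ℝ) (u : ℝ) : ℝ :=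
  sInf {x : ℝ | u ≤ cdf μ x}

/-- Squared Wasserstein-2 distance between measures on ℝ, via the quantile representation. -/
noncomputable def W2sq (μ ν : Measure ℝ) : ℝ :=
  ∫ u in Ioo (0:ℝ) 1, (quantile μ u - quantile ν u) ^ 2

/-- The one-dimensional Wasserstein-2 barycenter: the pushforward of the uniform
distribution on (0,1) by the weighted average of the quantile functions. -/
noncomputable def wassersteinBarycenter {K : ℕ} (w : Fin K → ℝ) (μ : Fin K → Measure ℝ) :
    Measure ℝ :=
  Measure.map (fun u => ∑ s, w s * quantile (μ s) u) (volume.restrict (Ioo (0:ℝ) 1))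

section Aux

open Filter Topology

instance unif_isProbabilityMeasure : IsProbabilityMeasure (volume.restrict (Ioo (0:ℝ) 1)) := by
  constructor
  rw [Measure.restrict_apply MeasurableSet.univ, Set.univ_inter, Real.volume_Ioo]
  norm_num

variable {ν : Measure ℝ} {u : ℝ}

lemma nonempty_S (ν : Measure ℝ) (hu1 : u < 1) : {x : ℝ | u ≤ cdf ν x}.Nonempty := by
  obtain ⟨x, hx⟩ := ((tendsto_cdf_atTop ν).eventually (eventually_gt_nhds hu1)).exists
  exact ⟨x, hx.le⟩

lemma bddBelow_S (ν : Measure ℝ) (hu0 : 0 < u) : BddBelow {x : ℝ | u ≤ cdf ν x} := by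
  obtain ⟨x₀, hx₀⟩ := ((tendsto_cdf_atBot ν).eventually (eventually_lt_nhds hu0)).exists
  refine ⟨x₀, fun x hx => ?_⟩
  by_contra hc
  push_neg at hc
  exact absurd (le_trans hx (monotone_cdf ν hc.le)) (not_le.2 hx₀)

lemma le_cdf_quantile (ν : Measure ℝ) (hu0 : 0 < u) (hu1 : u < 1) :
    u ≤ cdf ν (quantile ν u) := by
  have hne := nonempty_S ν hu1
  have key : ∀ y, quantile ν u < y → u ≤ cdf ν y := by
    intro y hy
    obtain ⟨z, hz, hzy⟩ := exists_lt_of_csInf_lt hne hy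
    exact le_trans hz (monotone_cdf ν hzy.le)
  have hrc : Tendsto (cdf ν) (𝓝[>] (quantile ν u)) (𝓝 (cdf ν (quantile ν u))) :=
    ((cdf ν).right_continuous _).mono_left (nhdsWithin_mono _ Ioi_subset_Ici_self)
  refine ge_of_tendsto hrc ?_
  filter_upwards [self_mem_nhdsWithin] with y hy using key y hy

lemma quantile_le_iff (ν : Measure ℝ) (hu0 : 0 < u) (hu1 : u < 1) {x : ℝ} :
    quantile ν u ≤ x ↔ u ≤ cdf ν x := by
  constructor
  · intro h; exact le_trans (le_cdf_quantile ν hu0 hu1) (monotone_cdf ν h)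
  · intro h; exact csInf_le (bddBelow_S ν hu0) h

lemma monotoneOn_quantile (ν : Measure ℝ) : MonotoneOn (quantile ν) (Ioo 0 1) := by
  intro x hx y hy hxy
  exact (quantile_le_iff ν hx.1 hx.2).2 (le_trans hxy (le_cdf_quantile ν hy.1 hy.2))

lemma aemeasurable_quantile (ν : Measure ℝ) :
    AEMeasurable (quantile ν) (volume.restrict (Ioo 0 1)) :=
  aemeasurable_restrict_of_monotoneOn measurableSet_Ioo (monotoneOn_quantile ν)

lemma volume_Iic_inter {c : ℝ} (h0 : 0 ≤ c) (h1 : c ≤ 1) :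
    volume.restrict (Ioo (0:ℝ) 1) (Iic c) = ENNReal.ofReal c := by
  rw [Measure.restrict_apply measurableSet_Iic]
  rcases eq_or_lt_of_le h1 with rfl | h1'
  · have : Iic (1:ℝ) ∩ Ioo 0 1 = Ioo 0 1 :=
      inter_eq_self_of_subset_right (fun x hx => le_of_lt hx.2)
    rw [this, Real.volume_Ioo]; norm_num
  · have : Iic c ∩ Ioo (0:ℝ) 1 = Ioc 0 c := by
      ext x
      simp only [mem_inter_iff, mem_Iic, mem_Ioo, mem_Ioc]
      constructor
      · rintro ⟨hxc, hx0, hx1⟩; exact ⟨hx0, hxc⟩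
      · rintro ⟨hx0, hxc⟩; exact ⟨hxc, hx0, lt_of_le_of_lt hxc h1'⟩
    rw [this, Real.volume_Ioc, sub_zero]

lemma map_quantile (ν : Measure ℝ) [IsProbabilityMeasure ν] :
    Measure.map (quantile ν) (volume.restrict (Ioo (0:ℝ) 1)) = ν := by
  haveI : IsProbabilityMeasure (Measure.map (quantile ν) (volume.restrict (Ioo (0:ℝ) 1))) :=
    Measure.isProbabilityMeasure_map (aemeasurable_quantile ν)
  refine Measure.ext_of_Iic _ ν (fun x => ?_)
  rw [Measure.map_apply_of_aemeasurable (aemeasurable_quantile ν) measurableSet_Iic]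
  have hset : quantile ν ⁻¹' Iic x ∩ Ioo 0 1 = Iic (cdf ν x) ∩ Ioo 0 1 := by
    ext u
    simp only [mem_inter_iff, mem_preimage, mem_Iic, mem_Ioo]
    constructor
    · rintro ⟨h, hu⟩; exact ⟨(quantile_le_iff ν hu.1 hu.2).1 h, hu⟩
    · rintro ⟨h, hu⟩; exact ⟨(quantile_le_iff ν hu.1 hu.2).2 h, hu⟩
  rw [Measure.restrict_apply' measurableSet_Ioo, hset,
    ← Measure.restrict_apply' measurableSet_Ioo,
    volume_Iic_inter (cdf_nonneg ν x) (cdf_le_one ν x), ofReal_cdf]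

lemma quantile_map_ae {g : ℝ → ℝ} (hg : MonotoneOn g (Ioo 0 1))
    (hgm : AEMeasurable g (volume.restrict (Ioo 0 1))) :
    quantile (Measure.map g (volume.restrict (Ioo (0:ℝ) 1)))
      =ᵐ[volume.restrict (Ioo (0:ℝ) 1)] g := by
  set B : Measure ℝ := Measure.map g (volume.restrict (Ioo (0:ℝ) 1)) with hB
  haveI : IsProbabilityMeasure B := Measure.isProbabilityMeasure_map hgm
  set D : Set ℝ := {u : ℝ | u ∈ Ioo (0:ℝ) 1 ∧ sSup (g '' Ioo 0 u) < g u} with hD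
  have hbdd : ∀ u ∈ Ioo (0:ℝ) 1, BddAbove (g '' Ioo 0 u) := by
    intro u hu
    refine ⟨g u, ?_⟩
    rintro _ ⟨t, ht, rfl⟩
    exact hg ⟨ht.1, ht.2.trans hu.2⟩ hu ht.2.le
  have hDc : D.Countable := by
    have hch : ∀ u ∈ D, ∃ q : ℚ, sSup (g '' Ioo 0 u) < (q:ℝ) ∧ (q:ℝ) < g u := by
      intro u hu; exact exists_rat_btwn hu.2
    choose! r hr1 hr2 using hch
    have hlt : ∀ a b : D, (a:ℝ) < (b:ℝ) → (r a : ℝ) < r b := by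
      intro a b hab
      have h1 : (r (a:ℝ) : ℝ) < g a := hr2 a a.2
      have h2 : g (a:ℝ) ≤ sSup (g '' Ioo 0 (b:ℝ)) :=
        le_csSup (hbdd b b.2.1) ⟨a, ⟨a.2.1.1, hab⟩, rfl⟩
      have h3 : sSup (g '' Ioo 0 (b:ℝ)) < (r (b:ℝ) : ℝ) := hr1 b b.2
      exact h1.trans_le (le_of_lt (lt_of_le_of_lt h2 h3))
    have hinj : Function.Injective (fun u : D => r u) := by
      intro a b hab
      simp only at hab
      rcases lt_trichotomy ((a:ℝ)) ((b:ℝ)) with h | h | h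
      · exact absurd hab (by exact_mod_cast ne_of_lt (hlt a b h))
      · exact Subtype.ext h
      · exact absurd hab.symm (by exact_mod_cast ne_of_lt (hlt b a h))
    exact countable_coe_iff.1 hinj.countable
  have hDnull : volume.restrict (Ioo (0:ℝ) 1) D = 0 := by
    rw [Measure.restrict_apply' measurableSet_Ioo]
    exact measure_mono_null inter_subset_left (hDc.measure_zero _)
  have hmem : ∀ᵐ u ∂(volume.restrict (Ioo (0:ℝ) 1)), u ∈ Ioo (0:ℝ) 1 :=
    ae_restrict_mem measurableSet_Ioo
  have hnd : ∀ᵐ u ∂(volume.restrict (Ioo (0:ℝ) 1)), u ∉ D :=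
    measure_eq_zero_iff_ae_notMem.1 hDnull
  filter_upwards [hmem, hnd] with u hu hud
  have hA : ∀ v ∈ Ioo (0:ℝ) 1, v ≤ cdf B (g v) := by
    intro v hv
    have hsub : Ioo 0 v ⊆ g ⁻¹' Iic (g v) := by
      intro t ht; exact hg ⟨ht.1, ht.2.trans hv.2⟩ hv ht.2.le
    have h1 : ENNReal.ofReal v ≤ B (Iic (g v)) := by
      rw [hB, Measure.map_apply_of_aemeasurable hgm measurableSet_Iic]
      calc ENNReal.ofReal v = volume.restrict (Ioo (0:ℝ) 1) (Ioo 0 v) := by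
            rw [Measure.restrict_apply measurableSet_Ioo,
              inter_eq_self_of_subset_left (Ioo_subset_Ioo le_rfl hv.2.le),
              Real.volume_Ioo, sub_zero]
        _ ≤ _ := measure_mono hsub
    rw [cdf_eq_real, measureReal_def]
    calc v = (ENNReal.ofReal v).toReal := (ENNReal.toReal_ofReal hv.1.le).symm
      _ ≤ _ := ENNReal.toReal_mono (measure_ne_top B _) h1
  have hSne : g u ∈ {x : ℝ | u ≤ cdf B x} := hA u hu
  have hB1 : quantile B u ≤ g u := csInf_le (bddBelow_S B hu.1) hSne
  have hB2 : ∀ u' ∈ Ioo (0:ℝ) u, g u' ≤ quantile B u := by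
    intro u' hu'
    have hu'1 : u' ∈ Ioo (0:ℝ) 1 := ⟨hu'.1, hu'.2.trans hu.2⟩
    refine le_csInf ⟨g u, hSne⟩ ?_
    intro x hx
    by_contra hc
    push_neg at hc
    have hsub : g ⁻¹' Iic x ∩ Ioo 0 1 ⊆ Ioo 0 u' := by
      intro t ht
      refine ⟨ht.2.1, ?_⟩
      by_contra hle
      push_neg at hle
      exact absurd ((hg hu'1 ht.2 hle).trans ht.1) (not_le.2 hc)
    have hcdf : cdf B x ≤ u' := by
      rw [cdf_eq_real, measureReal_def]
      have hle : B (Iic x) ≤ ENNReal.ofReal u' := by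
        rw [hB, Measure.map_apply_of_aemeasurable hgm measurableSet_Iic,
          Measure.restrict_apply' measurableSet_Ioo]
        calc volume (g ⁻¹' Iic x ∩ Ioo 0 1) ≤ volume (Ioo 0 u') := measure_mono hsub
          _ = ENNReal.ofReal u' := by rw [Real.volume_Ioo, sub_zero]
      calc (B (Iic x)).toReal ≤ (ENNReal.ofReal u').toReal :=
            ENNReal.toReal_mono ENNReal.ofReal_ne_top hle
        _ = u' := ENNReal.toReal_ofReal hu'.1.le
    exact absurd (le_trans hx hcdf) (not_le.2 hu'.2)
  have hsup : sSup (g '' Ioo 0 u) = g u := by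
    by_contra hne
    refine hud ⟨hu, lt_of_le_of_ne ?_ hne⟩
    refine csSup_le ((nonempty_Ioo.2 hu.1).image g) ?_
    rintro _ ⟨t, ht, rfl⟩
    exact hg ⟨ht.1, ht.2.trans hu.2⟩ hu ht.2.le
  have hge : g u ≤ quantile B u := by
    rw [← hsup]
    refine csSup_le ((nonempty_Ioo.2 hu.1).image g) ?_
    rintro _ ⟨t, ht, rfl⟩
    exact hB2 t ht
  exact le_antisymm hB1 hge

lemma memLp_quantile (ν : Measure ℝ) [IsProbabilityMeasure ν]
    (hmom : Integrable (fun x : ℝ => x ^ 2) ν) :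
    MemLp (quantile ν) 2 (volume.restrict (Ioo (0:ℝ) 1)) := by
  have ham := aemeasurable_quantile ν
  refine (memLp_two_iff_integrable_sq ham.aestronglyMeasurable).2 ?_
  have hm : AEStronglyMeasurable (fun x : ℝ => x ^ 2)
      (Measure.map (quantile ν) (volume.restrict (Ioo (0:ℝ) 1))) := by
    rw [map_quantile ν]; exact (continuous_pow 2).aestronglyMeasurable
  have h2 : Integrable (fun x : ℝ => x ^ 2)
      (Measure.map (quantile ν) (volume.restrict (Ioo (0:ℝ) 1))) := by
    rw [map_quantile ν]; exact hmom
  exact (integrable_map_measure hm ham).1 h2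

lemma keyid {K : ℕ} (w a : Fin K → ℝ) (hw1 : ∑ s, w s = 1) (b : ℝ) :
    ∑ s, w s * (a s - b) ^ 2
      = ∑ s, w s * (a s - ∑ t, w t * a t) ^ 2 + (b - ∑ t, w t * a t) ^ 2 := by
  have h1 : ∀ c : ℝ, ∑ s, w s * (a s - c) ^ 2
      = ∑ s, w s * a s ^ 2 - 2 * c * (∑ t, w t * a t) + c ^ 2 := by
    intro c
    have e : ∀ s : Fin K, w s * (a s - c) ^ 2
        = w s * a s ^ 2 - 2 * c * (w s * a s) + c ^ 2 * w s := fun s => by ring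
    rw [Finset.sum_congr rfl fun s _ => e s, Finset.sum_add_distrib, Finset.sum_sub_distrib,
      ← Finset.mul_sum, ← Finset.mul_sum, hw1, mul_one]
  rw [h1 b, h1 (∑ t, w t * a t)]
  ring

end Aux

/-- The pushforward of `Unif(0,1)` by `q*(u) = ∑ w_s F_{μ_s}⁻¹(u)` is the unique minimizer of
`ν ↦ ∑ w_s W₂²(μ_s, ν)` over probability measures with finite second moment. -/
theorem wassersteinBarycenter_isUniqueMinimizer {K : ℕ} (w : Fin K → ℝ)
    (hw : ∀ s, 0 ≤ w s) (hw1 : ∑ s, w s = 1)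
    (μ : Fin K → Measure ℝ) (hprob : ∀ s, IsProbabilityMeasure (μ s))
    (hmom : ∀ s, Integrable (fun x : ℝ => x ^ 2) (μ s)) :
    (∀ ν : Measure ℝ, IsProbabilityMeasure ν → Integrable (fun x : ℝ => x ^ 2) ν →
      ∑ s, w s * W2sq (μ s) (wassersteinBarycenter w μ) ≤ ∑ s, w s * W2sq (μ s) ν) ∧
    (∀ ν : Measure ℝ, IsProbabilityMeasure ν → Integrable (fun x : ℝ => x ^ 2) ν →
      (∑ s, w s * W2sq (μ s) ν = ∑ s, w s * W2sq (μ s) (wassersteinBarycenter w μ)) →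
      ν = wassersteinBarycenter w μ) := by
  classical
  haveI : ∀ s, IsProbabilityMeasure (μ s) := hprob
  set g : ℝ → ℝ := fun u => ∑ s, w s * quantile (μ s) u with hgdef
  have hgmono : MonotoneOn g (Ioo 0 1) := by
    intro x hx y hy hxy
    exact Finset.sum_le_sum fun s _ =>
      mul_le_mul_of_nonneg_left (monotoneOn_quantile (μ s) hx hy hxy) (hw s)
  have hgm : AEMeasurable g (volume.restrict (Ioo (0:ℝ) 1)) :=
    aemeasurable_restrict_of_monotoneOn measurableSet_Ioo hgmono
  have hBdef : wassersteinBarycenter w μ = Measure.map g (volume.restrict (Ioo (0:ℝ) 1)) := rfl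
  haveI hBprob : IsProbabilityMeasure (wassersteinBarycenter w μ) := by
    rw [hBdef]; exact Measure.isProbabilityMeasure_map hgm
  have hqB : quantile (wassersteinBarycenter w μ) =ᵐ[volume.restrict (Ioo (0:ℝ) 1)] g := by
    rw [hBdef]; exact quantile_map_ae hgmono hgm
  have haL2 : ∀ s, MemLp (quantile (μ s)) 2 (volume.restrict (Ioo (0:ℝ) 1)) :=
    fun s => memLp_quantile (μ s) (hmom s)
  have hgL2 : MemLp g 2 (volume.restrict (Ioo (0:ℝ) 1)) :=
    memLp_finset_sum (f := fun s u => w s * quantile (μ s) u) Finset.univ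
      (fun s _ => (haL2 s).const_mul (w s))
  have main : ∀ b : ℝ → ℝ, MemLp b 2 (volume.restrict (Ioo (0:ℝ) 1)) →
      ∑ s, w s * ∫ u in Ioo (0:ℝ) 1, (quantile (μ s) u - b u) ^ 2
        = (∑ s, w s * ∫ u in Ioo (0:ℝ) 1, (quantile (μ s) u - g u) ^ 2)
          + ∫ u in Ioo (0:ℝ) 1, (b u - g u) ^ 2 := by
    intro b hb
    have hintb : ∀ s, Integrable (fun u => w s * (quantile (μ s) u - b u) ^ 2)
        (volume.restrict (Ioo (0:ℝ) 1)) :=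
      fun s => (((haL2 s).sub hb).integrable_sq).const_mul (w s)
    have hintg : ∀ s, Integrable (fun u => w s * (quantile (μ s) u - g u) ^ 2)
        (volume.restrict (Ioo (0:ℝ) 1)) :=
      fun s => (((haL2 s).sub hgL2).integrable_sq).const_mul (w s)
    have hbg : Integrable (fun u => (b u - g u) ^ 2) (volume.restrict (Ioo (0:ℝ) 1)) :=
      (hb.sub hgL2).integrable_sq
    have e1 : ∑ s, w s * ∫ u in Ioo (0:ℝ) 1, (quantile (μ s) u - b u) ^ 2
        = ∫ u in Ioo (0:ℝ) 1, ∑ s, w s * (quantile (μ s) u - b u) ^ 2 := by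
      rw [integral_finset_sum Finset.univ fun s _ => hintb s]
      exact Finset.sum_congr rfl fun s _ => (integral_const_mul (w s) _).symm
    have e2 : ∑ s, w s * ∫ u in Ioo (0:ℝ) 1, (quantile (μ s) u - g u) ^ 2
        = ∫ u in Ioo (0:ℝ) 1, ∑ s, w s * (quantile (μ s) u - g u) ^ 2 := by
      rw [integral_finset_sum Finset.univ fun s _ => hintg s]
      exact Finset.sum_congr rfl fun s _ => (integral_const_mul (w s) _).symm
    have e4 : ∫ u in Ioo (0:ℝ) 1, ∑ s, w s * (quantile (μ s) u - b u) ^ 2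
        = ∫ u in Ioo (0:ℝ) 1,
            ((∑ s, w s * (quantile (μ s) u - g u) ^ 2) + (b u - g u) ^ 2) :=
      integral_congr_ae (Filter.Eventually.of_forall fun u =>
        keyid w (fun s => quantile (μ s) u) hw1 (b u))
    rw [e1, e4, integral_add (integrable_finset_sum _ fun s _ => hintg s) hbg, e2]
  have hW2B : ∀ s : Fin K, W2sq (μ s) (wassersteinBarycenter w μ)
      = ∫ u in Ioo (0:ℝ) 1, (quantile (μ s) u - g u) ^ 2 := by
    intro s
    refine integral_congr_ae ?_
    filter_upwards [hqB] with u hu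
    rw [hu]
  have key : ∀ ν : Measure ℝ, IsProbabilityMeasure ν → Integrable (fun x : ℝ => x ^ 2) ν →
      ∑ s, w s * W2sq (μ s) ν
        = ∑ s, w s * W2sq (μ s) (wassersteinBarycenter w μ)
          + ∫ u in Ioo (0:ℝ) 1, (quantile ν u - g u) ^ 2 := by
    intro ν hν hmν
    haveI := hν
    have hb := memLp_quantile ν hmν
    have hm := main (quantile ν) hb
    calc ∑ s, w s * W2sq (μ s) ν
        = ∑ s, w s * ∫ u in Ioo (0:ℝ) 1, (quantile (μ s) u - quantile ν u) ^ 2 := rfl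
      _ = (∑ s, w s * ∫ u in Ioo (0:ℝ) 1, (quantile (μ s) u - g u) ^ 2)
            + ∫ u in Ioo (0:ℝ) 1, (quantile ν u - g u) ^ 2 := hm
      _ = ∑ s, w s * W2sq (μ s) (wassersteinBarycenter w μ)
            + ∫ u in Ioo (0:ℝ) 1, (quantile ν u - g u) ^ 2 := by
          have e : ∀ s : Fin K, w s * ∫ u in Ioo (0:ℝ) 1, (quantile (μ s) u - g u) ^ 2
              = w s * W2sq (μ s) (wassersteinBarycenter w μ) := fun s => by rw [hW2B s]
          rw [Finset.sum_congr rfl fun s _ => e s]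
  constructor
  · intro ν hν hmν
    rw [key ν hν hmν]
    have h0 : 0 ≤ ∫ u in Ioo (0:ℝ) 1, (quantile ν u - g u) ^ 2 :=
      integral_nonneg fun u => sq_nonneg _
    linarith
  · intro ν hν hmν heq
    haveI := hν
    rw [key ν hν hmν] at heq
    have hzero : ∫ u in Ioo (0:ℝ) 1, (quantile ν u - g u) ^ 2 = 0 := by linarith
    have hb := memLp_quantile ν hmν
    have hint : Integrable (fun u => (quantile ν u - g u) ^ 2)
        (volume.restrict (Ioo (0:ℝ) 1)) := (hb.sub hgL2).integrable_sq
    have hae : (fun u => (quantile ν u - g u) ^ 2) =ᵐ[volume.restrict (Ioo (0:ℝ) 1)] 0 :=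
      (integral_eq_zero_iff_of_nonneg (fun u => sq_nonneg _) hint).1 hzero
    have hae' : quantile ν =ᵐ[volume.restrict (Ioo (0:ℝ) 1)] g := by
      filter_upwards [hae] with u hu
      have h2 : (quantile ν u - g u) ^ 2 = 0 := hu
      have h3 : quantile ν u - g u = 0 := by
        exact pow_eq_zero_iff (two_ne_zero) |>.1 h2
      linarith
    calc ν = Measure.map (quantile ν) (volume.restrict (Ioo (0:ℝ) 1)) := (map_quantile ν).symm
      _ = Measure.map g (volume.restrict (Ioo (0:ℝ) 1)) := Measure.map_congr hae'
      _ = wassersteinBarycenter w μ := rfl
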